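/- Let G be a split graph of order n that arises from the disjoint union of a clique C of order c and an independent set I of order n−c (with n−c ≥ 1) by adding m edges, each joining a vertex of C to a vertex of I. If 3c ≤ n − 1 (i.e., c/n ≤ 1/3 − 1/(3n)), then Mo(G) ≤ c·(n−c)·(n−c−1). -/

import Mathlib

/-- `nG G u v` is the number of vertices of `G` whose distance to `u` is strictly
smaller than their distance to `v` (vertices at infinite distance to both `u` and `v`
are counted for neither, since the extended distance `⊤` is not `< ⊤`). -/
noncomputable def nG {V : Type*} [Fintype V] (G : SimpleGraph V) (u v : V) : ℕ :=
  Set.ncard {w : V | G.edist w u < G.edist w v}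

/-- The Mostar index `Mo(G) = ∑_{uv ∈ E(G)} |nG(u,v) - nG(v,u)|` of a finite simple graph. -/
noncomputable def mostar {V : Type*} [Fintype V] (G : SimpleGraph V) : ℤ :=
  ∑ e ∈ (Set.toFinite G.edgeSet).toFinset,
    Sym2.lift ⟨fun u v => |(nG G u v : ℤ) - (nG G v u : ℤ)|, fun _ _ => abs_sub_comm _ _⟩ e

namespace MostarSplitAux

open Finset

variable {V : Type*} [Fintype V] [DecidableEq V] (G : SimpleGraph V) [DecidableRel G.Adj]
  (C : Finset V)

/-- number of neighbours of `v` inside `C`. -/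
def aC (v : V) : ℕ := (C.filter fun u => G.Adj u v).card

/-- number of non-neighbours of `v` inside `C`. -/
def bC (v : V) : ℕ := (C.filter fun u => ¬ G.Adj u v).card

/-- for `u u' ∈ C`, the number of vertices outside `C` adjacent to `u` but not `u'`. -/
def XC (u u' : V) : ℕ := (Cᶜ.filter fun w => G.Adj u w ∧ ¬ G.Adj u' w).card

/-- symmetric per-edge bound function. -/
def BB (u v : V) : ℤ :=
  if u ∈ C then
    (if v ∈ C then ((max (XC G C u v) (XC G C v u) : ℕ) : ℤ)
     else (bC G C v : ℤ) + ((Cᶜ.card : ℤ) - 1))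
  else if v ∈ C then (bC G C u : ℤ) + ((Cᶜ.card : ℤ) - 1)
  else 0

lemma BB_symm (u v : V) : BB G C u v = BB G C v u := by
  by_cases hu : u ∈ C <;> by_cases hv : v ∈ C <;>
    simp [BB, hu, hv, max_comm]

lemma aC_add_bC (v : V) : aC G C v + bC G C v = C.card := by
  classical
  simpa [aC, bC] using Finset.card_filter_add_card_filter_not
    (s := C) (p := fun u => G.Adj u v)

lemma nG_le_of_cover {u v : V} (F : Finset V)
    (h : ∀ w, G.edist w u < G.edist w v → w ∈ F) : nG G u v ≤ F.card := by
  have hsub : {w : V | G.edist w u < G.edist w v} ⊆ (F : Set V) := fun w hw => h w hw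
  calc nG G u v ≤ (F : Set V).ncard := Set.ncard_le_ncard hsub F.finite_toSet
    _ = F.card := Set.ncard_coe_finset F

lemma one_le_nG {u v : V} (h : u ≠ v) : 1 ≤ nG G u v := by
  have hu : u ∈ {w : V | G.edist w u < G.edist w v} := by
    simp only [Set.mem_setOf_eq, SimpleGraph.edist_self]
    exact G.edist_pos_of_ne h
  have : 0 < nG G u v := by
    rw [nG, Set.ncard_pos (Set.toFinite _)]
    exact ⟨u, hu⟩
  omega

lemma two_le_edist {u w : V} (hne : w ≠ u) (hadj : ¬ G.Adj w u) : 2 ≤ G.edist w u := by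
  have h0 : G.edist w u ≠ 0 := (SimpleGraph.edist_eq_zero_iff (G := G)).ne.mpr hne
  have h1 : G.edist w u ≠ 1 := fun h => hadj (SimpleGraph.edist_eq_one_iff_adj.mp h)
  have hlt : 1 < G.edist w u :=
    lt_of_le_of_ne (Order.one_le_iff_pos.mpr (pos_iff_ne_zero.mpr h0)) (Ne.symm h1)
  exact Order.add_one_le_of_lt hlt

lemma exists_adj_of_edist_lt_top {w u : V} (h : G.edist w u < ⊤) (hne : w ≠ u) :
    ∃ x, G.Adj w x := by
  have hr : G.Reachable w u := SimpleGraph.edist_ne_top_iff_reachable.mp h.ne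
  obtain ⟨p⟩ := hr
  cases p with
  | nil => exact absurd rfl hne
  | cons h p => exact ⟨_, h⟩

variable {G C}

lemma clique_cover (hclique : ∀ u ∈ C, ∀ v ∈ C, u ≠ v → G.Adj u v)
    (hindep : ∀ u ∉ C, ∀ v ∉ C, ¬ G.Adj u v) {u u' : V} (hu : u ∈ C) (hu' : u' ∈ C) :
    ∀ w, G.edist w u < G.edist w u' →
      w ∈ insert u (Cᶜ.filter fun w => G.Adj u w ∧ ¬ G.Adj u' w) := by
  intro w hlt
  by_contra hw
  simp only [mem_insert, mem_filter, mem_compl, not_or, not_and] at hw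
  obtain ⟨hwu, hw2⟩ := hw
  by_cases hwC : w ∈ C
  · have h1 : G.edist w u' ≤ 1 := by
      rcases eq_or_ne w u' with rfl | hne'
      · simp [SimpleGraph.edist_self]
      · exact le_of_eq (SimpleGraph.edist_eq_one_iff_adj.mpr (hclique w hwC u' hu' hne'))
    have h0 : 0 < G.edist w u := G.edist_pos_of_ne hwu
    exact absurd (lt_of_lt_of_le hlt h1) (not_lt.mpr (Order.one_le_iff_pos.mpr h0))
  · by_cases hadj' : G.Adj u' w
    · have h1 : G.edist w u' ≤ 1 := le_of_eq (SimpleGraph.edist_eq_one_iff_adj.mpr hadj'.symm)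
      have h0 : 0 < G.edist w u := G.edist_pos_of_ne hwu
      exact absurd (lt_of_lt_of_le hlt h1) (not_lt.mpr (Order.one_le_iff_pos.mpr h0))
    · have hadj : ¬ G.Adj u w := fun h => (hw2 hwC h) hadj'
      have h2 : 2 ≤ G.edist w u := two_le_edist G (hwu) (fun h => hadj h.symm)
      have htop : G.edist w u < ⊤ := lt_of_lt_of_le hlt le_top
      obtain ⟨x, hx⟩ := exists_adj_of_edist_lt_top G htop hwu
      have hxC : x ∈ C := by
        by_contra hxC
        exact hindep w hwC x hxC hx
      have hxu' : x ≠ u' := fun h => hadj' (h ▸ hx).symm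
      have hxd : G.edist x u' ≤ 1 :=
        le_of_eq (SimpleGraph.edist_eq_one_iff_adj.mpr (hclique x hxC u' hu' hxu'))
      have hwx : G.edist w x ≤ 1 := le_of_eq (SimpleGraph.edist_eq_one_iff_adj.mpr hx)
      have hle : G.edist w u' ≤ 2 := by
        calc G.edist w u' ≤ G.edist w x + G.edist x u' := SimpleGraph.edist_triangle
          _ ≤ 1 + 1 := add_le_add hwx hxd
          _ = 2 := by norm_num
      exact absurd hlt (not_lt.mpr (le_trans hle h2))

lemma cross_cover1 {u v : V} (hu : u ∈ C) (hv : v ∉ C) :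
    ∀ w, G.edist w u < G.edist w v →
      w ∈ insert u ((C.filter fun x => ¬ G.Adj x v) ∪ Cᶜ.erase v) := by
  intro w hlt
  by_cases hwC : w ∈ C
  · rcases eq_or_ne w u with rfl | hne
    · exact mem_insert_self _ _
    · by_cases hadj : G.Adj w v
      · exfalso
        have h1 : G.edist w v ≤ 1 := le_of_eq (SimpleGraph.edist_eq_one_iff_adj.mpr hadj)
        have h0 : 0 < G.edist w u := G.edist_pos_of_ne hne
        exact absurd (lt_of_lt_of_le hlt h1) (not_lt.mpr (Order.one_le_iff_pos.mpr h0))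
      · exact mem_insert_of_mem (mem_union_left _ (mem_filter.mpr ⟨hwC, hadj⟩))
  · rcases eq_or_ne w v with rfl | hne
    · exfalso
      rw [SimpleGraph.edist_self] at hlt
      simp at hlt
    · exact mem_insert_of_mem (mem_union_right _ (mem_erase.mpr ⟨hne, mem_compl.mpr hwC⟩))

lemma cross_cover2 (hclique : ∀ u ∈ C, ∀ v ∈ C, u ≠ v → G.Adj u v)
    {u v : V} (hu : u ∈ C) (hv : v ∉ C) :
    ∀ w, G.edist w v < G.edist w u → w ∈ Cᶜ := by
  intro w hlt
  by_contra hwC'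
  rw [mem_compl, not_not] at hwC'
  rcases eq_or_ne w u with rfl | hne
  · rw [SimpleGraph.edist_self] at hlt
    simp at hlt
  · have h1 : G.edist w u ≤ 1 :=
      le_of_eq (SimpleGraph.edist_eq_one_iff_adj.mpr (hclique w hwC' u hu hne))
    have h0 : 0 < G.edist w v := G.edist_pos_of_ne (fun h => hv (h ▸ hwC'))
    exact absurd (lt_of_lt_of_le hlt h1) (not_lt.mpr (Order.one_le_iff_pos.mpr h0))

lemma cross_bound (hclique : ∀ u ∈ C, ∀ v ∈ C, u ≠ v → G.Adj u v)
    {u v : V} (hu : u ∈ C) (hv : v ∉ C) (hadj : G.Adj u v) :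
    |(nG G u v : ℤ) - (nG G v u : ℤ)| ≤ (bC G C v : ℤ) + ((Cᶜ.card : ℤ) - 1) := by
  have hne : u ≠ v := fun h => hv (h ▸ hu)
  have h1 : 1 ≤ nG G u v := one_le_nG G hne
  have h2 : 1 ≤ nG G v u := one_le_nG G hne.symm
  have hub1 : nG G u v ≤ 1 + (bC G C v + (Cᶜ.card - 1)) := by
    refine le_trans (nG_le_of_cover G _ (cross_cover1 hu hv)) ?_
    refine le_trans (card_insert_le _ _) ?_
    have hun := card_union_le (C.filter fun x => ¬ G.Adj x v) (Cᶜ.erase v)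
    rw [card_erase_of_mem (mem_compl.mpr hv)] at hun
    have : (C.filter fun x => ¬ G.Adj x v).card = bC G C v := rfl
    omega
  have hub2 : nG G v u ≤ Cᶜ.card := nG_le_of_cover G _ (cross_cover2 hclique hu hv)
  have ht1 : 1 ≤ Cᶜ.card := card_pos.mpr ⟨v, mem_compl.mpr hv⟩
  rw [abs_sub_le_iff]
  constructor <;> omega

lemma clique_bound (hclique : ∀ u ∈ C, ∀ v ∈ C, u ≠ v → G.Adj u v)
    (hindep : ∀ u ∉ C, ∀ v ∉ C, ¬ G.Adj u v)
    {u u' : V} (hu : u ∈ C) (hu' : u' ∈ C) (hne : u ≠ u') :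
    |(nG G u u' : ℤ) - (nG G u' u : ℤ)| ≤ ((max (XC G C u u') (XC G C u' u) : ℕ) : ℤ) := by
  have h1 : 1 ≤ nG G u u' := one_le_nG G hne
  have h2 : 1 ≤ nG G u' u := one_le_nG G hne.symm
  have hub1 : nG G u u' ≤ 1 + XC G C u u' := by
    refine le_trans (nG_le_of_cover G _ (clique_cover hclique hindep hu hu')) ?_
    have := card_insert_le u (Cᶜ.filter fun w => G.Adj u w ∧ ¬ G.Adj u' w)
    have hx : (Cᶜ.filter fun w => G.Adj u w ∧ ¬ G.Adj u' w).card = XC G C u u' := rfl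
    omega
  have hub2 : nG G u' u ≤ 1 + XC G C u' u := by
    refine le_trans (nG_le_of_cover G _ (clique_cover hclique hindep hu' hu)) ?_
    have := card_insert_le u' (Cᶜ.filter fun w => G.Adj u' w ∧ ¬ G.Adj u w)
    have hx : (Cᶜ.filter fun w => G.Adj u' w ∧ ¬ G.Adj u w).card = XC G C u' u := rfl
    omega
  have hm1 : XC G C u u' ≤ max (XC G C u u') (XC G C u' u) := le_max_left _ _
  have hm2 : XC G C u' u ≤ max (XC G C u u') (XC G C u' u) := le_max_right _ _
  rw [abs_sub_le_iff]
  constructor <;> omega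

lemma edge_bound (hclique : ∀ u ∈ C, ∀ v ∈ C, u ≠ v → G.Adj u v)
    (hindep : ∀ u ∉ C, ∀ v ∉ C, ¬ G.Adj u v) {u v : V} (hadj : G.Adj u v) :
    |(nG G u v : ℤ) - (nG G v u : ℤ)| ≤ BB G C u v := by
  by_cases hu : u ∈ C <;> by_cases hv : v ∈ C
  · rw [BB, if_pos hu, if_pos hv]
    exact clique_bound hclique hindep hu hv hadj.ne
  · rw [BB, if_pos hu, if_neg hv]
    exact cross_bound hclique hu hv hadj
  · rw [BB, if_neg hu, if_pos hv, abs_sub_comm]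
    exact cross_bound hclique hv hu hadj.symm
  · exact absurd hadj (hindep u hu v hv)

end MostarSplitAux

open Finset MostarSplitAux in
/-- For a split graph of order `n` with clique of order `c`, independent set of order
`n - c ≥ 1` and `m` cross edges: if `3c ≤ n - 1` then `Mo(G) ≤ c·(n-c)·(n-c-1)`. -/
theorem mostar_split_le_small_clique {V : Type*} [Fintype V] [DecidableEq V] (G : SimpleGraph V)
    [DecidableRel G.Adj] (n c m : ℕ) (hn : Fintype.card V = n)
    (C : Finset V) (hC : C.card = c)
    (hclique : ∀ u ∈ C, ∀ v ∈ C, u ≠ v → G.Adj u v)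
    (hindep : ∀ u ∉ C, ∀ v ∉ C, ¬ G.Adj u v)
    (hm : (G.edgeFinset.filter fun e => ∃ v ∈ e, v ∉ C).card = m)
    (hcn : c < n) (h3c : 3 * (c : ℤ) ≤ (n : ℤ) - 1) :
    (mostar G : ℝ) ≤ (c : ℝ) * ((n : ℝ) - (c : ℝ)) * ((n : ℝ) - (c : ℝ) - 1) := by
  classical
  set t := Cᶜ.card with htdef
  have htc : t = n - c := by rw [htdef, Finset.card_compl, hC, hn]
  have htZ : (t : ℤ) = (n : ℤ) - (c : ℤ) := by
    rw [htc]; push_cast [Nat.cast_sub hcn.le]; ring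
  have ht1 : 1 ≤ t := by omega
  -- the symmetric bound function on Sym2
  set g : Sym2 V → ℤ := Sym2.lift ⟨BB G C, BB_symm G C⟩ with hgdef
  set EF := (Set.toFinite G.edgeSet).toFinset with hEF
  have hadj_of_mem : ∀ {u v : V}, s(u, v) ∈ EF → G.Adj u v := by
    intro u v h
    rw [hEF, Set.Finite.mem_toFinset] at h
    exact h
  -- Step 1 : mostar G ≤ ∑ g
  have hstep1 : mostar G ≤ ∑ e ∈ EF, g e := by
    refine Finset.sum_le_sum ?_
    intro e he
    revert he
    refine Sym2.inductionOn e ?_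
    intro u v he
    rw [hgdef, Sym2.lift_mk, Sym2.lift_mk]
    exact edge_bound hclique hindep (hadj_of_mem he)
  -- split edges into clique edges and cross edges
  set P : Sym2 V → Prop := fun e => ∀ x ∈ e, x ∈ C with hPdef
  have hsplit : ∑ e ∈ EF, g e
      = ∑ e ∈ EF.filter P, g e + ∑ e ∈ EF.filter (fun e => ¬ P e), g e :=
    (Finset.sum_filter_add_sum_filter_not EF P g).symm
  -- clique part
  have hclq : ∑ e ∈ EF.filter P, g e ≤ ∑ p ∈ C.offDiag, (XC G C p.1 p.2 : ℤ) := by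
    set pick : Sym2 V → V × V := fun e =>
      if XC G C (Quot.out e).1 (Quot.out e).2 < XC G C (Quot.out e).2 (Quot.out e).1
        then ((Quot.out e).2, (Quot.out e).1) else Quot.out e with hpickdef
    have hmk : ∀ e : Sym2 V, Sym2.mk (pick e).1 (pick e).2 = e := by
      intro e
      rcases hout : Quot.out e with ⟨x, y⟩
      have hemk : s(x, y) = e := by have h := Quot.out_eq e; rw [hout] at h; exact h
      simp only [hpickdef, hout]
      split
      · rw [← hemk]; exact Sym2.eq_swap
      · exact hemk
    have hval : ∀ e ∈ EF.filter P, g e = (XC G C (pick e).1 (pick e).2 : ℤ) := by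
      intro e he
      rcases hout : Quot.out e with ⟨x, y⟩
      have hemk : s(x, y) = e := by have h := Quot.out_eq e; rw [hout] at h; exact h
      have hxC : x ∈ C ∧ y ∈ C := by
        rw [mem_filter] at he
        have h2 := he.2
        rw [hPdef] at h2
        rw [← hemk] at h2
        exact ⟨h2 x (by simp [Sym2.mem_iff]), h2 y (by simp [Sym2.mem_iff])⟩
      have hg : g e = ((max (XC G C x y) (XC G C y x) : ℕ) : ℤ) := by
        rw [← hemk, hgdef, Sym2.lift_mk]
        simp only [BB, if_pos hxC.1, if_pos hxC.2]
      have hpick : pick e = if XC G C x y < XC G C y x then (y, x) else (x, y) := by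
        simp only [hpickdef, hout]
      rw [hg, hpick]
      split <;> rename_i hsp
      · simp [max_eq_right hsp.le]
      · simp [max_eq_left (not_lt.mp hsp)]
    rw [Finset.sum_congr rfl hval]
    have hinj : Set.InjOn pick (EF.filter P) := by
      intro e he e' he' h
      rw [← hmk e, ← hmk e', h]
    have himg : ∑ p ∈ (EF.filter P).image pick, (XC G C p.1 p.2 : ℤ)
        = ∑ e ∈ EF.filter P, (XC G C (pick e).1 (pick e).2 : ℤ) :=
      Finset.sum_image (fun x hx y hy h => hinj hx hy h)
    rw [← himg]
    refine Finset.sum_le_sum_of_subset_of_nonneg ?_ (fun p _ _ => by positivity)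
    intro p hp
    rw [Finset.mem_image] at hp
    obtain ⟨e, he, rfl⟩ := hp
    rw [mem_filter] at he
    have hadj : G.Adj (pick e).1 (pick e).2 := by
      have : s((pick e).1, (pick e).2) ∈ EF := by
        rw [hmk e]; exact he.1
      exact hadj_of_mem this
    have hP := he.2
    rw [hPdef] at hP
    have hm1 : (pick e).1 ∈ s((pick e).1, (pick e).2) := Sym2.mem_mk_left _ _
    have hm2 : (pick e).2 ∈ s((pick e).1, (pick e).2) := Sym2.mem_mk_right _ _
    rw [hmk e] at hm1 hm2
    have h1 : (pick e).1 ∈ C := hP _ hm1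
    have h2 : (pick e).2 ∈ C := hP _ hm2
    exact Finset.mem_offDiag.mpr ⟨h1, h2, hadj.ne⟩
  -- evaluate the offDiag sum
  have hoffd : ∑ p ∈ C.offDiag, (XC G C p.1 p.2 : ℤ)
      = ∑ w ∈ Cᶜ, (aC G C w : ℤ) * (bC G C w : ℤ) := by
    have hXC : ∀ p : V × V, (XC G C p.1 p.2 : ℤ)
        = ∑ w ∈ Cᶜ, (if G.Adj p.1 w ∧ ¬ G.Adj p.2 w then (1 : ℤ) else 0) := by
      intro p
      rw [XC]
      exact Finset.natCast_card_filter _ _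
    rw [Finset.sum_congr rfl (fun p _ => hXC p), Finset.sum_comm]
    refine Finset.sum_congr rfl ?_
    intro w _
    rw [Finset.sum_boole]
    have hset : C.offDiag.filter (fun p => G.Adj p.1 w ∧ ¬ G.Adj p.2 w)
        = (C.filter fun u => G.Adj u w) ×ˢ (C.filter fun u => ¬ G.Adj u w) := by
      ext p
      simp only [mem_filter, Finset.mem_offDiag, mem_product]
      constructor
      · rintro ⟨⟨h1, h2, _⟩, h4, h5⟩
        exact ⟨⟨h1, h4⟩, ⟨h2, h5⟩⟩
      · rintro ⟨⟨h1, h4⟩, ⟨h2, h5⟩⟩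
        exact ⟨⟨h1, h2, fun h => h5 (h ▸ h4)⟩, h4, h5⟩
    rw [hset, Finset.card_product]
    push_cast [aC, bC]
    ring
  -- cross part
  have hcross : ∑ e ∈ EF.filter (fun e => ¬ P e), g e
      ≤ ∑ v ∈ Cᶜ, (aC G C v : ℤ) * ((bC G C v : ℤ) + ((t : ℤ) - 1)) := by
    set pick : Sym2 V → V × V := fun e =>
      if (Quot.out e).1 ∈ C then Quot.out e
        else ((Quot.out e).2, (Quot.out e).1) with hpickdef
    have hmk : ∀ e : Sym2 V, Sym2.mk (pick e).1 (pick e).2 = e := by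
      intro e
      rcases hout : Quot.out e with ⟨x, y⟩
      have hemk : s(x, y) = e := by have h := Quot.out_eq e; rw [hout] at h; exact h
      simp only [hpickdef, hout]
      split
      · exact hemk
      · rw [← hemk]; exact Sym2.eq_swap
    have hkey : ∀ e ∈ EF.filter (fun e => ¬ P e),
        (pick e).1 ∈ C ∧ (pick e).2 ∉ C ∧ G.Adj (pick e).1 (pick e).2 := by
      intro e he
      rw [mem_filter] at he
      have hadj : G.Adj (pick e).1 (pick e).2 := by
        have : s((pick e).1, (pick e).2) ∈ EF := by
          rw [hmk e]; exact he.1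
        exact hadj_of_mem this
      have hnP := he.2
      have hnP' : ∃ x ∈ e, x ∉ C := by
        simpa [hPdef, not_forall] using hnP
      obtain ⟨x, hxe, hxC⟩ := hnP'
      rcases hout : Quot.out e with ⟨y, z⟩
      have hemk0 : s(y, z) = e := by have h := Quot.out_eq e; rw [hout] at h; exact h
      have hyz : G.Adj y z := by
        have : s(y, z) ∈ EF := by rw [hemk0]; exact he.1
        exact hadj_of_mem this
      have hxmem : x = y ∨ x = z := by
        rw [← hemk0] at hxe
        simpa [Sym2.mem_iff] using hxe
      by_cases hyC : y ∈ C
      · have hzC : z ∉ C := by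
          rcases hxmem with rfl | rfl
          · exact absurd hyC hxC
          · exact hxC
        have : pick e = (y, z) := by simp [hpickdef, hout, hyC]
        rw [this]
        exact ⟨hyC, hzC, hyz⟩
      · have hzC : z ∈ C := by
          by_contra hzC
          exact hindep y hyC z hzC hyz
        have : pick e = (z, y) := by simp [hpickdef, hout, hyC]
        rw [this]
        exact ⟨hzC, hyC, hyz.symm⟩
    have hval : ∀ e ∈ EF.filter (fun e => ¬ P e),
        g e = (bC G C (pick e).2 : ℤ) + ((t : ℤ) - 1) := by
      intro e he
      obtain ⟨h1, h2, _⟩ := hkey e he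
      conv_lhs => rw [← hmk e]
      rw [hgdef]
      rcases hp : pick e with ⟨x, y⟩
      rw [hp] at h1 h2
      simp only [Sym2.lift_mk, BB, if_pos h1, if_neg h2, htdef]
    rw [Finset.sum_congr rfl hval]
    have hinj : Set.InjOn pick (EF.filter (fun e => ¬ P e)) := by
      intro e he e' he' h
      rw [← hmk e, ← hmk e', h]
    have himg : ∑ p ∈ (EF.filter (fun e => ¬ P e)).image pick,
          ((bC G C p.2 : ℤ) + ((t : ℤ) - 1))
        = ∑ e ∈ EF.filter (fun e => ¬ P e), ((bC G C (pick e).2 : ℤ) + ((t : ℤ) - 1)) :=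
      Finset.sum_image (fun x hx y hy h => hinj hx hy h)
    rw [← himg]
    have hnn : ∀ p ∈ (C ×ˢ Cᶜ).filter (fun p => G.Adj p.1 p.2),
        p ∉ (EF.filter (fun e => ¬ P e)).image pick → 0 ≤ (bC G C p.2 : ℤ) + ((t : ℤ) - 1) := by
      intro p _ _
      have : (0 : ℤ) ≤ (bC G C p.2 : ℤ) := by positivity
      omega
    refine le_trans (le_of_eq ?_) (Finset.sum_le_sum_of_subset_of_nonneg ?_ hnn) |>.trans ?_
    · rfl
    · intro p hp
      rw [Finset.mem_image] at hp
      obtain ⟨e, he, rfl⟩ := hp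
      obtain ⟨h1, h2, h3⟩ := hkey e he
      rw [mem_filter, mem_product]
      exact ⟨⟨h1, mem_compl.mpr h2⟩, h3⟩
    · -- evaluate the product-filter sum
      rw [Finset.sum_filter, Finset.sum_product, Finset.sum_comm]
      refine le_of_eq (Finset.sum_congr rfl ?_)
      intro v _
      have h1 : ∀ x ∈ C, (if G.Adj x v then ((bC G C v : ℤ) + ((t : ℤ) - 1)) else 0)
          = (if G.Adj x v then (1 : ℤ) else 0) * ((bC G C v : ℤ) + ((t : ℤ) - 1)) := by
        intro x _
        split <;> ring
      rw [Finset.sum_congr rfl h1, ← Finset.sum_mul, Finset.sum_boole]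
      rfl
  -- put everything together
  have hfinal : mostar G ≤ (t : ℤ) * ((c : ℤ) * ((t : ℤ) - 1)) := by
    have hperv : ∀ v ∈ Cᶜ, (aC G C v : ℤ) * (bC G C v : ℤ)
        + (aC G C v : ℤ) * ((bC G C v : ℤ) + ((t : ℤ) - 1))
        ≤ (c : ℤ) * ((t : ℤ) - 1) := by
      intro v _
      have hab : aC G C v + bC G C v = C.card := aC_add_bC G C v
      rw [hC] at hab
      have habZ : (aC G C v : ℤ) + (bC G C v : ℤ) = (c : ℤ) := by exact_mod_cast hab
      have ha0 : (0 : ℤ) ≤ (aC G C v : ℤ) := by positivity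
      have hb0 : (0 : ℤ) ≤ (bC G C v : ℤ) := by positivity
      have h2a : 2 * (aC G C v : ℤ) ≤ (t : ℤ) - 1 := by
        have : (aC G C v : ℤ) ≤ (c : ℤ) := by omega
        omega
      nlinarith [habZ, ha0, hb0, h2a]
    calc mostar G ≤ ∑ e ∈ EF, g e := hstep1
      _ = ∑ e ∈ EF.filter P, g e + ∑ e ∈ EF.filter (fun e => ¬ P e), g e := hsplit
      _ ≤ ∑ w ∈ Cᶜ, (aC G C w : ℤ) * (bC G C w : ℤ)
          + ∑ v ∈ Cᶜ, (aC G C v : ℤ) * ((bC G C v : ℤ) + ((t : ℤ) - 1)) := by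
          refine add_le_add (le_trans hclq (le_of_eq hoffd)) hcross
      _ = ∑ v ∈ Cᶜ, ((aC G C v : ℤ) * (bC G C v : ℤ)
          + (aC G C v : ℤ) * ((bC G C v : ℤ) + ((t : ℤ) - 1))) := by
          rw [← Finset.sum_add_distrib]
      _ ≤ ∑ _v ∈ Cᶜ, (c : ℤ) * ((t : ℤ) - 1) := Finset.sum_le_sum hperv
      _ = (t : ℤ) * ((c : ℤ) * ((t : ℤ) - 1)) := by
          rw [Finset.sum_const, nsmul_eq_mul, htdef]
  -- cast to ℝ
  have hR : ((mostar G : ℤ) : ℝ) ≤ (((t : ℤ) * ((c : ℤ) * ((t : ℤ) - 1)) : ℤ) : ℝ) := by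
    exact_mod_cast hfinal
  calc (mostar G : ℝ) ≤ (((t : ℤ) * ((c : ℤ) * ((t : ℤ) - 1)) : ℤ) : ℝ) := hR
    _ = (c : ℝ) * ((n : ℝ) - (c : ℝ)) * ((n : ℝ) - (c : ℝ) - 1) := by
        have h : (t : ℝ) = (n : ℝ) - (c : ℝ) := by exact_mod_cast htZ
        push_cast
        rw [h]
        ring
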